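/- Let f : E → ℝ be differentiable and L-smooth (L > 0), let x ∈ E, let ρ ∈ (0,1), β ∈ [1/2, 1) and γ_max > 0. Then: (i) there exists k ∈ ℕ such that γ_max·β^k satisfies the Armijo condition for f at x; and (ii) if k* is the least such k and γ = γ_max·β^{k*} is the backtracking line-search output, then min{(1 − ρ)/L, γ_max} ≤ γ ≤ γ_max. -/

import Mathlib

open InnerProductSpace

/-- Descent lemma: for an `L`-smooth `f`,
`f (x + v) ≤ f x + ⟪G x, v⟫ + L/2 ‖v‖²`. -/
lemma descent_lemma {d : ℕ} (L : ℝ) (hL : 0 < L)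
    (f : EuclideanSpace ℝ (Fin d) → ℝ)
    (G : EuclideanSpace ℝ (Fin d) → EuclideanSpace ℝ (Fin d))
    (hgrad : ∀ y, HasGradientAt f (G y) y)
    (hsmooth : ∀ u v, ‖G u - G v‖ ≤ L * ‖u - v‖)
    (x v : EuclideanSpace ℝ (Fin d)) :
    f (x + v) ≤ f x + ⟪G x, v⟫_ℝ + L / 2 * ‖v‖ ^ 2 := by
  set φ : ℝ → ℝ := fun t =>
    f (x + t • v) - t * ⟪G x, v⟫_ℝ - t ^ 2 * (L / 2 * ‖v‖ ^ 2) with hφdef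
  have hline : ∀ t : ℝ, HasDerivAt (fun s : ℝ => x + s • v) v t := by
    intro t
    simpa using (hasDerivAt_id t).smul_const v |>.const_add x
  have hg : ∀ t : ℝ, HasDerivAt (fun s => f (x + s • v)) ⟪G (x + t • v), v⟫_ℝ t := by
    intro t
    have := (hgrad (x + t • v)).hasFDerivAt.comp_hasDerivAt t (hline t)
    simp at this
    exact this
  have hφ : ∀ t : ℝ, HasDerivAt φ
      (⟪G (x + t • v), v⟫_ℝ - ⟪G x, v⟫_ℝ - 2 * t * (L / 2 * ‖v‖ ^ 2)) t := by
    intro t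
    have h1 : HasDerivAt (fun s : ℝ => s * ⟪G x, v⟫_ℝ) ⟪G x, v⟫_ℝ t := by
      simpa using (hasDerivAt_id t).mul_const ⟪G x, v⟫_ℝ
    have h2 : HasDerivAt (fun s : ℝ => s ^ 2 * (L / 2 * ‖v‖ ^ 2))
        (2 * t * (L / 2 * ‖v‖ ^ 2)) t := by
      have := (hasDerivAt_pow 2 t).mul_const (L / 2 * ‖v‖ ^ 2)
      simpa [mul_comm, mul_assoc, mul_left_comm] using this
    exact ((hg t).sub h1).sub h2
  have hderiv_nonpos : ∀ t ∈ Set.Icc (0 : ℝ) 1,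
      ⟪G (x + t • v), v⟫_ℝ - ⟪G x, v⟫_ℝ - 2 * t * (L / 2 * ‖v‖ ^ 2) ≤ 0 := by
    intro t ht
    have h1 : ⟪G (x + t • v) - G x, v⟫_ℝ ≤ ‖G (x + t • v) - G x‖ * ‖v‖ :=
      real_inner_le_norm _ _
    have h2 : ‖G (x + t • v) - G x‖ ≤ L * ‖t • v‖ := by
      simpa using hsmooth (x + t • v) x
    have h3 : ‖t • v‖ = t * ‖v‖ := by
      rw [norm_smul, Real.norm_eq_abs, abs_of_nonneg ht.1]
    have h4 : ⟪G (x + t • v) - G x, v⟫_ℝ = ⟪G (x + t • v), v⟫_ℝ - ⟪G x, v⟫_ℝ :=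
      inner_sub_left _ _ _
    have hv : 0 ≤ ‖v‖ := norm_nonneg v
    have h5 := mul_le_mul_of_nonneg_right h2 hv
    rw [h3] at h5
    nlinarith [h5]
  have hanti : AntitoneOn φ (Set.Icc (0 : ℝ) 1) := by
    apply antitoneOn_of_deriv_nonpos (convex_Icc 0 1)
    · exact fun t _ => ((hφ t).continuousAt).continuousWithinAt
    · exact fun t _ => ((hφ t).differentiableAt).differentiableWithinAt
    · intro t ht
      rw [(hφ t).deriv]
      exact hderiv_nonpos t (Set.mem_Icc_of_Ioo (by simpa using ht))
  have key := hanti (Set.left_mem_Icc.2 zero_le_one) (Set.right_mem_Icc.2 zero_le_one)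
    zero_le_one
  simp only [hφdef, zero_smul, add_zero, one_smul, zero_mul, sub_zero, one_mul,
    zero_pow, one_pow] at key
  linarith

/-- Backtracking line-search: for a differentiable `L`-smooth `f` (`L > 0`),
`ρ ∈ (0,1)`, `β ∈ [1/2, 1)`, `γ_max > 0` and any point `x`:
(i) some `γ_max·β^k` satisfies the Armijo condition for `f` at `x`; and
(ii) if `k` is the least such index (i.e. `γ = γ_max·β^k` is the backtracking
line-search output), then `min{(1 − ρ)/L, γ_max} ≤ γ ≤ γ_max`. -/
theorem stmt_8 {d : ℕ} (L ρ β γmax : ℝ) (hL : 0 < L) (hρ : ρ ∈ Set.Ioo (0 : ℝ) 1)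
    (hβ : β ∈ Set.Ico (1 / 2 : ℝ) 1) (hγmax : 0 < γmax)
    (f : EuclideanSpace ℝ (Fin d) → ℝ)
    (G : EuclideanSpace ℝ (Fin d) → EuclideanSpace ℝ (Fin d))
    (hgrad : ∀ y, HasGradientAt f (G y) y)
    (hsmooth : ∀ u v, ‖G u - G v‖ ≤ L * ‖u - v‖)
    (x : EuclideanSpace ℝ (Fin d)) :
    (∃ k : ℕ, f (x - (γmax * β ^ k) • G x) ≤ f x - ρ * (γmax * β ^ k) * ‖G x‖ ^ 2) ∧
    (∀ k : ℕ,
      f (x - (γmax * β ^ k) • G x) ≤ f x - ρ * (γmax * β ^ k) * ‖G x‖ ^ 2 →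
      (∀ j < k, ¬ (f (x - (γmax * β ^ j) • G x) ≤ f x - ρ * (γmax * β ^ j) * ‖G x‖ ^ 2)) →
      min ((1 - ρ) / L) γmax ≤ γmax * β ^ k ∧ γmax * β ^ k ≤ γmax) := by
  obtain ⟨hρ0, hρ1⟩ := hρ
  obtain ⟨hβ0, hβ1⟩ := hβ
  have hβpos : (0 : ℝ) < β := lt_of_lt_of_le (by norm_num) hβ0
  -- Armijo holds whenever γ ≤ 2(1-ρ)/L, γ ≥ 0
  have armijo_small : ∀ γ : ℝ, 0 ≤ γ → γ ≤ 2 * (1 - ρ) / L →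
      f (x - γ • G x) ≤ f x - ρ * γ * ‖G x‖ ^ 2 := by
    intro γ hγ0 hγle
    have hd := descent_lemma L hL f G hgrad hsmooth x (-(γ • G x))
    have hsub : x + -(γ • G x) = x - γ • G x := by abel
    rw [hsub] at hd
    have hinner : ⟪G x, -(γ • G x)⟫_ℝ = -(γ * ‖G x‖ ^ 2) := by
      rw [inner_neg_right, real_inner_smul_right, real_inner_self_eq_norm_sq]
    have hnorm : ‖-(γ • G x)‖ = γ * ‖G x‖ := by
      rw [norm_neg, norm_smul, Real.norm_eq_abs, abs_of_nonneg hγ0]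
    rw [hinner, hnorm] at hd
    have hGx : (0 : ℝ) ≤ ‖G x‖ ^ 2 := sq_nonneg _
    have : L / 2 * (γ * ‖G x‖) ^ 2 ≤ (1 - ρ) * γ * ‖G x‖ ^ 2 := by
      have h : L * γ ≤ 2 * (1 - ρ) := by
        rw [le_div_iff₀ hL] at hγle
        linarith [hγle]
      nlinarith [mul_le_mul_of_nonneg_right (mul_le_mul_of_nonneg_right h hγ0) hGx]
    nlinarith
  -- existence
  have hex : ∃ k : ℕ, γmax * β ^ k ≤ 2 * (1 - ρ) / L := by
    have hεpos : 0 < (1 - ρ) / (L * γmax) := div_pos (by linarith) (by positivity)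
    obtain ⟨k, hk⟩ := exists_pow_lt_of_lt_one hεpos hβ1
    refine ⟨k, ?_⟩
    have : γmax * β ^ k < γmax * ((1 - ρ) / (L * γmax)) :=
      mul_lt_mul_of_pos_left hk hγmax
    have heq : γmax * ((1 - ρ) / (L * γmax)) = (1 - ρ) / L := by
      field_simp
    rw [heq] at this
    have : γmax * β ^ k ≤ (1 - ρ) / L := le_of_lt this
    have h2 : (1 - ρ) / L ≤ 2 * (1 - ρ) / L := by
      gcongr
      linarith
    linarith [this, h2]
  constructor
  · obtain ⟨k, hk⟩ := hex
    exact ⟨k, armijo_small _ (by positivity) hk⟩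
  · intro k hk hmin
    constructor
    · match k with
      | 0 => simpa using min_le_right ((1 - ρ) / L) γmax
      | (m + 1) =>
        have hfail := hmin m (Nat.lt_succ_self m)
        have hgt : 2 * (1 - ρ) / L < γmax * β ^ m := by
          by_contra h
          push_neg at h
          exact hfail (armijo_small _ (by positivity) h)
        have hA : (1 - ρ) / L ≤ γmax * β ^ (m + 1) := by
          have hbm : (0:ℝ) < β ^ m := pow_pos hβpos m
          have : γmax * β ^ (m + 1) = (γmax * β ^ m) * β := by ring
          rw [this]
          have h2 : (2 * (1 - ρ) / L) * (1/2 : ℝ) ≤ (γmax * β ^ m) * β := by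
            apply mul_le_mul hgt.le hβ0 (by norm_num) (by positivity)
          have heq : (2 * (1 - ρ) / L) * (1/2 : ℝ) = (1 - ρ) / L := by ring
          linarith [h2]
        exact le_trans (min_le_left _ _) hA
    · have hp : β ^ k ≤ 1 := pow_le_one₀ hβpos.le hβ1.le
      nlinarith [hp]
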